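/- Let 0 < q < 1, w ≥ 1, and for i = 1,…,w let k_i, n_i ∈ ℕ and x_i ∈ [0,1]. Then B_{k₁,…,k_w; n₁,…,n_w}(x₁,…,x_w; q) = Σ_{l₁=k₁}^{n₁} Σ_{l₂=k₂}^{n₂} ⋯ Σ_{l_w=k_w}^{n_w} ∏_{i=1}^{w} C(n_i,l_i) · C(l_i,k_i) · (−1)^{l_i−k_i} · q^{(l_i−k_i)(1−x_i)} · [x_i]_q^{l_i}. -/

import Mathlib

open Finset

/-- The `q`-number `[x]_q = (1 - q^x)/(1 - q)` (real exponent). -/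
noncomputable def qnum (q x : ℝ) : ℝ := (1 - q ^ x) / (1 - q)

/-- The modified `q`-Bernstein polynomial
`B_{k,n}(x;q) = C(n,k) [x]_q^k [1-x]_q^(n-k)`. -/
noncomputable def qBern (q : ℝ) (k n : ℕ) (x : ℝ) : ℝ :=
  (n.choose k : ℝ) * qnum q x ^ k * qnum q (1 - x) ^ (n - k)

lemma qnum_one_sub (q : ℝ) (hq0 : 0 < q) (hq1 : q < 1) (x : ℝ) :
    qnum q (1 - x) = 1 - q ^ (1 - x) * qnum q x := by
  have hq : (1 : ℝ) - q ≠ 0 := by linarith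
  have hmul : q ^ (1 - x) * q ^ x = q := by
    rw [← Real.rpow_add hq0, show (1 - x) + x = 1 by ring, Real.rpow_one]
  unfold qnum
  field_simp
  linear_combination -hmul

lemma qBern_expand (q : ℝ) (hq0 : 0 < q) (hq1 : q < 1) (k n : ℕ) (x : ℝ) :
    qBern q k n x =
      ∑ l ∈ Finset.Icc k n,
        ((n.choose l : ℝ) * (l.choose k : ℝ) * (-1 : ℝ) ^ (l - k) *
          q ^ (((l - k : ℕ) : ℝ) * (1 - x)) * qnum q x ^ l) := by
  rcases le_or_gt k n with hkn | hkn
  · rw [show Finset.Icc k n = Finset.Ico k (n+1) by rw [Nat.Icc_eq_range', Nat.Ico_eq_range'],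
      Finset.sum_Ico_eq_sum_range, show n + 1 - k = n - k + 1 by omega]
    unfold qBern
    rw [qnum_one_sub q hq0 hq1 x, sub_eq_add_neg, add_comm, add_pow, Finset.mul_sum]
    apply Finset.sum_congr rfl
    intro j hj
    rw [Finset.mem_range] at hj
    have hjle : j ≤ n - k := by omega
    have hchoose : (n.choose (k + j) : ℝ) * ((k + j).choose k : ℝ) =
        (n.choose k : ℝ) * ((n - k).choose j : ℝ) := by
      have := Nat.choose_mul (n := n) (k := k + j) (s := k) (by omega)
      have h2 : k + j - k = j := by omega
      rw [h2] at this
      exact_mod_cast congrArg (Nat.cast : ℕ → ℝ) this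
    have hsub : k + j - k = j := by omega
    have hrpow : q ^ ((j : ℝ) * (1 - x)) = (q ^ (1 - x)) ^ j := by
      rw [mul_comm, Real.rpow_mul hq0.le, Real.rpow_natCast]
    rw [hsub]
    push_cast [hrpow]
    linear_combination -(qnum q x ^ k * qnum q x ^ j * (q ^ (1 - x)) ^ j * (-1 : ℝ) ^ j) * hchoose
  · rw [Finset.Icc_eq_empty (by omega : ¬ k ≤ n), Finset.sum_empty]
    unfold qBern
    rw [Nat.choose_eq_zero_of_lt hkn]
    simp

/-- Expansion of the modified `q`-Bernstein polynomials of several variables: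
`B_{k;n}(x;q) = Σ_{l₁=k₁}^{n₁} ⋯ Σ_{l_w=k_w}^{n_w}
  ∏ᵢ C(nᵢ,lᵢ) C(lᵢ,kᵢ) (−1)^{lᵢ−kᵢ} q^{(lᵢ−kᵢ)(1−xᵢ)} [xᵢ]_q^{lᵢ}`. -/
theorem modified_qBernstein_expansion
    (q : ℝ) (hq0 : 0 < q) (hq1 : q < 1)
    (w : ℕ) (hw : 1 ≤ w) (k n : Fin w → ℕ)
    (x : Fin w → ℝ) (hx : ∀ i, x i ∈ Set.Icc (0 : ℝ) 1) :
    ∏ i, qBern q (k i) (n i) (x i) =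
      ∑ l ∈ Finset.Icc k n,
        ∏ i, ((n i).choose (l i) : ℝ) * ((l i).choose (k i) : ℝ) *
          (-1 : ℝ) ^ (l i - k i) * q ^ (((l i - k i : ℕ) : ℝ) * (1 - x i)) *
          qnum q (x i) ^ (l i) := by
  have h1 : ∀ i, qBern q (k i) (n i) (x i) =
      ∑ l ∈ Finset.Icc (k i) (n i),
        (((n i).choose l : ℝ) * (l.choose (k i) : ℝ) * (-1 : ℝ) ^ (l - k i) *
          q ^ (((l - k i : ℕ) : ℝ) * (1 - x i)) * qnum q (x i) ^ l) :=
    fun i => qBern_expand q hq0 hq1 (k i) (n i) (x i)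
  calc ∏ i, qBern q (k i) (n i) (x i)
      = ∏ i, ∑ l ∈ Finset.Icc (k i) (n i),
        (((n i).choose l : ℝ) * (l.choose (k i) : ℝ) * (-1 : ℝ) ^ (l - k i) *
          q ^ (((l - k i : ℕ) : ℝ) * (1 - x i)) * qnum q (x i) ^ l) := by
        exact Finset.prod_congr rfl fun i _ => h1 i
    _ = ∑ l ∈ Fintype.piFinset (fun i => Finset.Icc (k i) (n i)),
        ∏ i, (((n i).choose (l i) : ℝ) * ((l i).choose (k i) : ℝ) * (-1 : ℝ) ^ (l i - k i) *
          q ^ (((l i - k i : ℕ) : ℝ) * (1 - x i)) * qnum q (x i) ^ (l i)) :=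
        Finset.prod_univ_sum _ _
    _ = _ := by rw [Pi.Icc_eq]
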